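/- (Existence of a bandwidth-optimal 3-step Allgather on DGX-1.) There exists a valid algorithm for the Allgather collective with C = 6 chunks per node on the DGX-1 topology with S = 3 steps and total rounds R = 7 (for some round sequence r_0, r_1, r_2 with r_0 + r_1 + r_2 = 7). Its bandwidth cost R/C = 7/6 matches the lower bound 6R ≥ 7C, so it is bandwidth-optimal. -/

import Mathlib

/-- The set-valued run of a candidate `T`: `V_0 = pre`,
`V_{s+1} = V_s ∪ {(c,n') : ∃ n, (c,n) ∈ V_s ∧ (c,n,n',s) ∈ T}`. -/
def stepRun {G P S : ℕ} (pre : Set (Fin G × Fin P))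
    (T : Finset (Fin G × Fin P × Fin P × Fin S)) : ℕ → Set (Fin G × Fin P)
  | 0 => pre
  | s + 1 =>
      stepRun pre T s ∪
        {q | ∃ n, (q.1, n) ∈ stepRun pre T s ∧ ∃ h : s < S, (q.1, n, q.2, ⟨s, h⟩) ∈ T}

/-- `T` with round sequence `r` is a valid algorithm for `(cap, pre, post)`:
(i) every send is of a chunk present at its source, (ii) the postcondition holds
after step `S`, (iii) for every step `s` and pair `(n,n')` the number of chunks sent
from `n` to `n'` at step `s` is at most `cap n n' * r s`. -/
def ValidAlgo {G P S : ℕ} (cap : Fin P → Fin P → ℕ) (pre post : Set (Fin G × Fin P))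
    (T : Finset (Fin G × Fin P × Fin P × Fin S)) (r : Fin S → ℕ) : Prop :=
  (∀ c n n' s, (c, n, n', s) ∈ T → (c, n) ∈ stepRun pre T (s : ℕ)) ∧
  post ⊆ stepRun pre T S ∧
  ∀ s n n',
    (T.filter fun x => x.2.1 = n ∧ x.2.2.1 = n' ∧ x.2.2.2 = s).card ≤ cap n n' * r s

/-- Allgather precondition with `C` chunks per node (`G = C*P`):
chunk `c` initially resides exactly on node `c mod P`. -/
def agPre (C P : ℕ) : Set (Fin (C * P) × Fin P) := {q | (q.1 : ℕ) % P = (q.2 : ℕ)}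

/-- The DGX-1 topology on 8 GPUs: capacity 2 in both directions on the undirected edges
{0,1},{1,4},{4,5},{5,6},{6,7},{2,7},{2,3},{0,3}; capacity 1 in both directions on
{0,2},{1,2},{1,3},{3,6},{4,6},{4,7},{5,7},{0,5}; capacity 0 otherwise. -/
def dgx1cap (n n' : Fin 8) : ℕ :=
  if ((n, n') ∈ ([(0,1),(1,4),(4,5),(5,6),(6,7),(2,7),(2,3),(0,3)] : List (Fin 8 × Fin 8))
      ∨ (n', n) ∈ ([(0,1),(1,4),(4,5),(5,6),(6,7),(2,7),(2,3),(0,3)] : List (Fin 8 × Fin 8)))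
  then 2
  else if ((n, n') ∈ ([(0,2),(1,2),(1,3),(3,6),(4,6),(4,7),(5,7),(0,5)] : List (Fin 8 × Fin 8))
      ∨ (n', n) ∈ ([(0,2),(1,2),(1,3),(3,6),(4,6),(4,7),(5,7),(0,5)] : List (Fin 8 × Fin 8)))
  then 1 else 0

set_option maxRecDepth 100000
set_option maxHeartbeats 4000000

instance : NeZero (6 * 8) := ⟨by norm_num⟩

abbrev Pr := Fin (6 * 8) × Fin 8
abbrev Sd := Fin (6 * 8) × Fin 8 × Fin 8 × Fin 3

def LT0 : List Sd := [(0, 0, 3, 0), (1, 1, 0, 0), (1, 1, 2, 0), (2, 2, 0, 0), (2, 2, 3, 0), (2, 2, 7, 0), (3, 3, 0, 0), (3, 3, 2, 0), (4, 4, 5, 0), (4, 4, 7, 0), (5, 5, 4, 0), (5, 5, 6, 0), (6, 6, 4, 0), (6, 6, 7, 0), (7, 7, 2, 0), (7, 7, 6, 0), (8, 0, 1, 0), (8, 0, 3, 0), (9, 1, 2, 0), (9, 1, 4, 0), (10, 2, 0, 0), (10, 2, 3, 0), (10, 2, 7, 0), (11, 3, 0, 0), (11, 3, 1, 0), (11,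 3, 2, 0), (12, 4, 1, 0), (12, 4, 6, 0), (13, 5, 0, 0), (13, 5, 6, 0), (14, 6, 5, 0), (14, 6, 7, 0), (15, 7, 2, 0), (15, 7, 4, 0), (15, 7, 6, 0), (16, 0, 1, 0), (16, 0, 5, 0), (17, 1, 3, 0), (17, 1, 4, 0), (18, 2, 1, 0), (19, 3, 1, 0), (19, 3, 6, 0), (20, 4, 1, 0), (20, 4, 5, 0), (21, 5, 0, 0), (21, 5, 4, 0), (22, 6, 4, 0), (22, 6, 5, 0), (22, 6, 7, 0), (23, 7, 5, 0), (24, 0, 1, 0), (24, 0, 3, 0), (24, 0, 5, 0), (25, 1, 0, 0), (26, 2, 3, 0), (27, 3, 0, 0), (27, 3, 2, 0), (28, 4, 5, 0), (28, 4, 7, 0), (29, 5, 7, 0), (30, 6, 3, 0), (30, 6, 5, 0), (31, 7, 2, 0), (32, 0, 2, 0), (32, 0, 3, 0), (33, 1, 0, 0), (33, 1, 4, 0), (34, 2, 1, 0), (34, 2, 7, 0), (35, 3, 6, 0), (36, 4, 1, 0), (36, 4, 6, 0), (37, 5, 4, 0), (37, 5, 6, 0), (37, 5, 7, 0), (38,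 6, 5, 0), (39, 7, 5, 0), (39, 7, 6, 0), (40, 0, 1, 0), (40, 0, 2, 0), (41, 1, 0, 0), (41, 1, 3, 0), (41, 1, 4, 0), (42, 2, 3, 0), (42, 2, 7, 0), (43, 3, 0, 0), (43, 3, 2, 0), (44, 4, 1, 0), (44, 4, 5, 0), (45, 5, 4, 0), (45, 5, 6, 0), (46, 6, 3, 0), (46, 6, 7, 0), (47, 7, 2, 0), (47, 7, 4, 0), (47, 7, 6, 0)]
def LT1 : List Sd := [(0, 3, 2, 1), (0, 3, 6, 1), (1, 0, 3, 1), (2, 7, 4, 1), (2, 7, 5, 1), (3, 0, 5, 1), (4, 7, 2, 1), (4, 5, 6, 1), (5, 6, 7, 1), (6, 4, 1, 1), (6, 4, 5, 1), (7, 2, 3, 1), (7, 6, 5, 1), (8, 3, 6, 1), (9, 4, 5, 1), (10, 0, 1, 1), (10, 7, 6, 1), (11, 1, 4, 1), (11, 2, 7, 1), (12, 1, 2, 1), (12, 6, 5, 1), (12, 6, 7, 1), (13, 0, 1, 1), (13, 0, 2, 1), (13, 0, 3, 1), (14, 5, 4, 1), (15, 2, 0, 1), (15, 2, 3, 1), (15,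 6, 5, 1), (16, 0, 3, 1), (16, 5, 6, 1), (16, 5, 7, 1), (17, 3, 0, 1), (17, 3, 2, 1), (17, 4, 6, 1), (18, 1, 4, 1), (19, 1, 0, 1), (20, 1, 0, 1), (20, 5, 7, 1), (21, 0, 1, 1), (21, 0, 2, 1), (21, 5, 6, 1), (22, 4, 1, 1), (23, 5, 0, 1), (23, 7, 6, 1), (24, 5, 6, 1), (25, 0, 3, 1), (25, 0, 5, 1), (26, 3, 0, 1), (26, 2, 1, 1), (27, 0, 1, 1), (27, 2, 7, 1), (28, 4, 1, 1), (28, 7, 2, 1), (29, 7, 2, 1), (29, 5, 4, 1), (29, 7, 6, 1), (30, 3, 0, 1), (30, 5, 4, 1), (31, 2, 1, 1), (31, 2, 3, 1), (31, 7, 5, 1), (32, 3, 1, 1), (32, 2, 7, 1), (33, 4, 5, 1), (33, 4, 7, 1), (34, 1, 0, 1), (34, 1, 4, 1), (34, 7, 6, 1), (35, 3, 2, 1), (35, 6, 4, 1), (35, 6, 7, 1), (36, 1, 2, 1), (36, 1, 3, 1), (37, 4, 1, 1), (37, 7, 2, 1), (38, 6, 3, 1), (38, 5, 4, 1), (39,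 5, 0, 1), (40, 1, 4, 1), (41, 3, 2, 1), (41, 4, 6, 1), (42, 7, 4, 1), (43, 2, 7, 1), (44, 1, 0, 1), (44, 1, 3, 1), (44, 4, 7, 1), (45, 6, 3, 1), (45, 6, 7, 1), (46, 3, 0, 1), (46, 3, 1, 1), (46, 6, 4, 1), (46, 6, 5, 1), (47, 2, 0, 1), (47, 2, 3, 1), (47, 4, 5, 1)]
def LT2 : List Sd := [(0, 0, 1, 2), (0, 6, 4, 2), (0, 6, 5, 2), (0, 6, 7, 2), (1, 1, 4, 2), (1, 0, 5, 2), (1, 3, 6, 2), (1, 2, 7, 2), (2, 4, 1, 2), (2, 7, 6, 2), (3, 0, 1, 2), (3, 5, 4, 2), (3, 3, 6, 2), (3, 5, 7, 2), (4, 5, 0, 2), (4, 4, 1, 2), (4, 2, 3, 2), (5, 5, 0, 2), (5, 4, 1, 2), (5, 7, 2, 2), (5, 6, 3, 2), (6, 1, 0, 2), (6, 7, 2, 2), (6, 1, 3, 2), (7, 3, 0, 2), (7, 3, 1, 2), (7, 7, 4, 2), (8, 0, 2, 2), (8, 6, 4, 2), (8, 6, 5, 2), (8, 6, 7, 2), (9,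 2, 0, 2), (9, 2, 3, 2), (9, 4, 6, 2), (9, 5, 7, 2), (10, 1, 4, 2), (10, 6, 5, 2), (11, 4, 5, 2), (11, 7, 6, 2), (12, 2, 0, 2), (12, 1, 3, 2), (13, 1, 4, 2), (13, 2, 7, 2), (14, 5, 0, 2), (14, 4, 1, 2), (14, 7, 2, 2), (14, 6, 3, 2), (15, 0, 1, 2), (16, 1, 2, 2), (16, 5, 4, 2), (17, 6, 5, 2), (17, 6, 7, 2), (18, 1, 0, 2), (18, 2, 3, 2), (18, 4, 5, 2), (18, 4, 6, 2), (18, 2, 7, 2), (19, 1, 2, 2), (19, 1, 4, 2), (19, 0, 5, 2), (19, 6, 7, 2), (20, 7, 2, 2), (20, 0, 3, 2), (20, 5, 6, 2), (21, 0, 3, 2), (21, 2, 7, 2), (22, 1, 0, 2), (22, 7, 2, 2), (22, 1, 3, 2), (23, 0, 1, 2), (23, 0, 2, 2), (23, 0, 3, 2), (23, 5, 4, 2), (24, 3, 2, 2), (24, 5, 4, 2), (24, 6, 7, 2), (25, 3, 2, 2), (25, 5, 4, 2), (25, 5, 6, 2), (25, 5, 7, 2), (26, 1, 4, 2), (26,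 0, 5, 2), (26, 3, 6, 2), (26, 2, 7, 2), (27, 1, 4, 2), (27, 7, 5, 2), (27, 7, 6, 2), (28, 1, 0, 2), (28, 2, 3, 2), (28, 5, 6, 2), (29, 2, 0, 2), (29, 2, 1, 2), (29, 6, 3, 2), (30, 4, 1, 2), (30, 3, 2, 2), (30, 4, 7, 2), (31, 1, 0, 2), (31, 5, 4, 2), (31, 5, 6, 2), (32, 7, 4, 2), (32, 7, 5, 2), (32, 7, 6, 2), (33, 7, 2, 2), (33, 0, 3, 2), (33, 5, 6, 2), (34, 0, 3, 2), (34, 6, 5, 2), (35, 3, 0, 2), (35, 3, 1, 2), (35, 4, 5, 2), (36, 3, 0, 2), (36, 6, 5, 2), (36, 4, 7, 2), (37, 1, 0, 2), (37, 2, 3, 2), (38, 3, 0, 2), (38, 4, 1, 2), (38, 3, 2, 2), (38, 4, 7, 2), (39, 0, 1, 2), (39, 0, 2, 2), (39, 0, 3, 2), (39, 6, 4, 2), (40, 2, 3, 2), (40, 4, 5, 2), (40, 4, 6, 2), (40, 2, 7, 2), (41, 4, 5, 2), (41, 6, 7, 2), (42, 3, 0, 2), (42, 2, 1, 2), (42,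 4, 5, 2), (42, 7, 6, 2), (43, 2, 1, 2), (43, 7, 4, 2), (43, 7, 5, 2), (43, 7, 6, 2), (44, 3, 2, 2), (44, 5, 6, 2), (45, 3, 0, 2), (45, 3, 1, 2), (45, 3, 2, 2), (46, 1, 2, 2), (47, 0, 1, 2)]
def LV0 : List Pr := [(0, 0), (1, 1), (2, 2), (3, 3), (4, 4), (5, 5), (6, 6), (7, 7), (8, 0), (9, 1), (10, 2), (11, 3), (12, 4), (13, 5), (14, 6), (15, 7), (16, 0), (17, 1), (18, 2), (19, 3), (20, 4), (21, 5), (22, 6), (23, 7), (24, 0), (25, 1), (26, 2), (27, 3), (28, 4), (29, 5), (30, 6), (31, 7), (32, 0), (33, 1), (34, 2), (35, 3), (36, 4), (37, 5), (38, 6), (39, 7), (40, 0), (41, 1), (42, 2), (43, 3), (44, 4), (45, 5), (46, 6), (47, 7)]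
def LV1 : List Pr := [(0, 0), (0, 3), (1, 0), (1, 1), (1, 2), (2, 0), (2, 2), (2, 3), (2, 7), (3, 0), (3, 2), (3, 3), (4, 4), (4, 5), (4, 7), (5, 4), (5, 5), (5, 6), (6, 4), (6, 6), (6, 7), (7, 2), (7, 6), (7, 7), (8, 0), (8, 1), (8, 3), (9, 1), (9, 2), (9, 4), (10, 0), (10, 2), (10, 3), (10, 7), (11, 0), (11, 1), (11, 2), (11, 3), (12, 1), (12, 4), (12, 6), (13, 0), (13, 5), (13, 6), (14, 5), (14, 6), (14, 7), (15, 2), (15, 4), (15, 6), (15, 7), (16, 0), (16, 1), (16, 5), (17, 1), (17, 3), (17, 4), (18, 1), (18, 2), (19, 1), (19, 3), (19, 6), (20, 1), (20, 4), (20, 5), (21, 0), (21, 4), (21, 5), (22, 4), (22, 5), (22, 6), (22, 7), (23, 5), (23, 7), (24, 0), (24, 1), (24, 3), (24, 5), (25, 0), (25, 1), (26, 2), (26, 3), (27, 0), (27, 2), (27, 3), (28, 4), (28, 5), (28, 7), (29, 5), (29, 7), (30, 3), (30, 5), (30, 6), (31, 2), (31, 7), (32, 0), (32, 2), (32, 3),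 (33, 0), (33, 1), (33, 4), (34, 1), (34, 2), (34, 7), (35, 3), (35, 6), (36, 1), (36, 4), (36, 6), (37, 4), (37, 5), (37, 6), (37, 7), (38, 5), (38, 6), (39, 5), (39, 6), (39, 7), (40, 0), (40, 1), (40, 2), (41, 0), (41, 1), (41, 3), (41, 4), (42, 2), (42, 3), (42, 7), (43, 0), (43, 2), (43, 3), (44, 1), (44, 4), (44, 5), (45, 4), (45, 5), (45, 6), (46, 3), (46, 6), (46, 7), (47, 2), (47, 4), (47, 6), (47, 7)]
def LV2 : List Pr := [(0, 0), (0, 2), (0, 3), (0, 6), (1, 0), (1, 1), (1, 2), (1, 3), (2, 0), (2, 2), (2, 3), (2, 4), (2, 5), (2, 7), (3, 0), (3, 2), (3, 3), (3, 5), (4, 2), (4, 4), (4, 5), (4, 6), (4, 7), (5, 4), (5, 5), (5, 6), (5, 7), (6, 1), (6, 4), (6, 5), (6, 6), (6, 7), (7, 2), (7, 3), (7, 5), (7, 6), (7, 7), (8, 0), (8, 1), (8, 3), (8, 6), (9, 1), (9, 2), (9, 4), (9, 5), (10, 0), (10, 1), (10, 2), (10, 3), (10, 6), (10, 7), (11,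 0), (11, 1), (11, 2), (11, 3), (11, 4), (11, 7), (12, 1), (12, 2), (12, 4), (12, 5), (12, 6), (12, 7), (13, 0), (13, 1), (13, 2), (13, 3), (13, 5), (13, 6), (14, 4), (14, 5), (14, 6), (14, 7), (15, 0), (15, 2), (15, 3), (15, 4), (15, 5), (15, 6), (15, 7), (16, 0), (16, 1), (16, 3), (16, 5), (16, 6), (16, 7), (17, 0), (17, 1), (17, 2), (17, 3), (17, 4), (17, 6), (18, 1), (18, 2), (18, 4), (19, 0), (19, 1), (19, 3), (19, 6), (20, 0), (20, 1), (20, 4), (20, 5), (20, 7), (21, 0), (21, 1), (21, 2), (21, 4), (21, 5), (21, 6), (22, 1), (22, 4), (22, 5), (22, 6), (22, 7), (23, 0), (23, 5), (23, 6), (23, 7), (24, 0), (24, 1), (24, 3), (24, 5), (24, 6), (25, 0), (25, 1), (25, 3), (25, 5), (26, 0), (26, 1), (26, 2), (26, 3), (27, 0), (27, 1), (27, 2), (27, 3), (27, 7), (28, 1), (28, 2), (28, 4), (28, 5), (28, 7), (29, 2), (29, 4), (29, 5), (29, 6), (29, 7), (30, 0), (30, 3), (30, 4), (30, 5), (30,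 6), (31, 1), (31, 2), (31, 3), (31, 5), (31, 7), (32, 0), (32, 1), (32, 2), (32, 3), (32, 7), (33, 0), (33, 1), (33, 4), (33, 5), (33, 7), (34, 0), (34, 1), (34, 2), (34, 4), (34, 6), (34, 7), (35, 2), (35, 3), (35, 4), (35, 6), (35, 7), (36, 1), (36, 2), (36, 3), (36, 4), (36, 6), (37, 1), (37, 2), (37, 4), (37, 5), (37, 6), (37, 7), (38, 3), (38, 4), (38, 5), (38, 6), (39, 0), (39, 5), (39, 6), (39, 7), (40, 0), (40, 1), (40, 2), (40, 4), (41, 0), (41, 1), (41, 2), (41, 3), (41, 4), (41, 6), (42, 2), (42, 3), (42, 4), (42, 7), (43, 0), (43, 2), (43, 3), (43, 7), (44, 0), (44, 1), (44, 3), (44, 4), (44, 5), (44, 7), (45, 3), (45, 4), (45, 5), (45, 6), (45, 7), (46, 0), (46, 1), (46, 3), (46, 4), (46, 5), (46, 6), (46, 7), (47, 0), (47, 2), (47, 3), (47, 4), (47, 5), (47, 6), (47, 7)]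
def LV3 : List Pr := [(0, 0), (0, 1), (0, 2), (0, 3), (0, 4), (0, 5), (0, 6), (0, 7), (1, 0), (1, 1), (1, 2), (1, 3), (1, 4), (1, 5), (1, 6), (1, 7), (2, 0), (2, 1), (2, 2), (2, 3), (2, 4), (2, 5), (2, 6), (2, 7), (3, 0), (3, 1), (3, 2), (3, 3), (3, 4), (3, 5), (3, 6), (3, 7), (4, 0), (4, 1), (4, 2), (4, 3), (4, 4), (4, 5), (4, 6), (4, 7), (5, 0), (5, 1), (5, 2), (5, 3), (5, 4), (5, 5), (5, 6), (5, 7), (6, 0), (6, 1), (6, 2), (6, 3), (6, 4), (6, 5), (6, 6), (6, 7), (7, 0), (7, 1), (7, 2), (7, 3), (7, 4), (7, 5), (7, 6), (7, 7), (8, 0), (8, 1), (8, 2), (8, 3), (8, 4), (8, 5), (8, 6), (8, 7), (9, 0), (9, 1), (9, 2), (9, 3), (9, 4), (9, 5), (9, 6), (9, 7), (10, 0), (10, 1), (10, 2), (10, 3), (10, 4), (10, 5), (10, 6), (10, 7), (11, 0), (11, 1), (11, 2), (11, 3), (11, 4), (11, 5), (11, 6), (11, 7), (12, 0), (12, 1),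 (12, 2), (12, 3), (12, 4), (12, 5), (12, 6), (12, 7), (13, 0), (13, 1), (13, 2), (13, 3), (13, 4), (13, 5), (13, 6), (13, 7), (14, 0), (14, 1), (14, 2), (14, 3), (14, 4), (14, 5), (14, 6), (14, 7), (15, 0), (15, 1), (15, 2), (15, 3), (15, 4), (15, 5), (15, 6), (15, 7), (16, 0), (16, 1), (16, 2), (16, 3), (16, 4), (16, 5), (16, 6), (16, 7), (17, 0), (17, 1), (17, 2), (17, 3), (17, 4), (17, 5), (17, 6), (17, 7), (18, 0), (18, 1), (18, 2), (18, 3), (18, 4), (18, 5), (18, 6), (18, 7), (19, 0), (19, 1), (19, 2), (19, 3), (19, 4), (19, 5), (19, 6), (19, 7), (20, 0), (20, 1), (20, 2), (20, 3), (20, 4), (20, 5), (20, 6), (20, 7), (21, 0), (21, 1), (21, 2), (21, 3), (21, 4), (21, 5), (21, 6), (21, 7), (22, 0), (22, 1), (22, 2), (22, 3), (22, 4), (22, 5), (22, 6), (22, 7), (23, 0), (23, 1), (23, 2), (23, 3), (23, 4), (23, 5), (23, 6), (23, 7), (24, 0), (24, 1), (24, 2), (24, 3), (24, 4), (24, 5),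 (24, 6), (24, 7), (25, 0), (25, 1), (25, 2), (25, 3), (25, 4), (25, 5), (25, 6), (25, 7), (26, 0), (26, 1), (26, 2), (26, 3), (26, 4), (26, 5), (26, 6), (26, 7), (27, 0), (27, 1), (27, 2), (27, 3), (27, 4), (27, 5), (27, 6), (27, 7), (28, 0), (28, 1), (28, 2), (28, 3), (28, 4), (28, 5), (28, 6), (28, 7), (29, 0), (29, 1), (29, 2), (29, 3), (29, 4), (29, 5), (29, 6), (29, 7), (30, 0), (30, 1), (30, 2), (30, 3), (30, 4), (30, 5), (30, 6), (30, 7), (31, 0), (31, 1), (31, 2), (31, 3), (31, 4), (31, 5), (31, 6), (31, 7), (32, 0), (32, 1), (32, 2), (32, 3), (32, 4), (32, 5), (32, 6), (32, 7), (33, 0), (33, 1), (33, 2), (33, 3), (33, 4), (33, 5), (33, 6), (33, 7), (34, 0), (34, 1), (34, 2), (34, 3), (34, 4), (34, 5), (34, 6), (34, 7), (35, 0), (35, 1), (35, 2), (35, 3), (35, 4), (35, 5), (35, 6), (35, 7), (36, 0), (36, 1), (36, 2), (36, 3), (36, 4), (36, 5), (36, 6), (36, 7), (37, 0), (37, 1),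 (37, 2), (37, 3), (37, 4), (37, 5), (37, 6), (37, 7), (38, 0), (38, 1), (38, 2), (38, 3), (38, 4), (38, 5), (38, 6), (38, 7), (39, 0), (39, 1), (39, 2), (39, 3), (39, 4), (39, 5), (39, 6), (39, 7), (40, 0), (40, 1), (40, 2), (40, 3), (40, 4), (40, 5), (40, 6), (40, 7), (41, 0), (41, 1), (41, 2), (41, 3), (41, 4), (41, 5), (41, 6), (41, 7), (42, 0), (42, 1), (42, 2), (42, 3), (42, 4), (42, 5), (42, 6), (42, 7), (43, 0), (43, 1), (43, 2), (43, 3), (43, 4), (43, 5), (43, 6), (43, 7), (44, 0), (44, 1), (44, 2), (44, 3), (44, 4), (44, 5), (44, 6), (44, 7), (45, 0), (45, 1), (45, 2), (45, 3), (45, 4), (45, 5), (45, 6), (45, 7), (46, 0), (46, 1), (46, 2), (46, 3), (46, 4), (46, 5), (46, 6), (46, 7), (47, 0), (47, 1), (47, 2), (47, 3), (47, 4), (47, 5), (47, 6), (47, 7)]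
def LD0 : List Pr := [(0, 3), (1, 0), (1, 2), (2, 0), (2, 3), (2, 7), (3, 0), (3, 2), (4, 5), (4, 7), (5, 4), (5, 6), (6, 4), (6, 7), (7, 2), (7, 6), (8, 1), (8, 3), (9, 2), (9, 4), (10, 0), (10, 3), (10, 7), (11, 0), (11, 1), (11, 2), (12, 1), (12, 6), (13, 0), (13, 6), (14, 5), (14, 7), (15, 2), (15, 4), (15, 6), (16, 1), (16, 5), (17, 3), (17, 4), (18, 1), (19, 1), (19, 6), (20, 1), (20, 5), (21, 0), (21, 4), (22, 4), (22, 5), (22, 7), (23, 5), (24, 1), (24, 3), (24, 5), (25, 0), (26, 3), (27, 0), (27, 2), (28, 5), (28, 7), (29, 7), (30, 3), (30, 5), (31, 2), (32, 2), (32, 3), (33, 0), (33, 4), (34, 1), (34, 7), (35, 6), (36, 1), (36, 6), (37, 4), (37, 6), (37, 7), (38, 5), (39, 5), (39, 6), (40, 1), (40, 2), (41, 0), (41, 3), (41, 4), (42, 3), (42, 7), (43, 0), (43, 2), (44, 1), (44, 5), (45, 4), (45, 6), (46, 3), (46, 7), (47, 2), (47, 4), (47, 6)]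
def LD1 : List Pr := [(0, 2), (0, 6), (1, 3), (2, 4), (2, 5), (3, 5), (4, 2), (4, 6), (5, 7), (6, 1), (6, 5), (7, 3), (7, 5), (8, 6), (9, 5), (10, 1), (10, 6), (11, 4), (11, 7), (12, 2), (12, 5), (12, 7), (13, 1), (13, 2), (13, 3), (14, 4), (15, 0), (15, 3), (15, 5), (16, 3), (16, 6), (16, 7), (17, 0), (17, 2), (17, 6), (18, 4), (19, 0), (20, 0), (20, 7), (21, 1), (21, 2), (21, 6), (22, 1), (23, 0), (23, 6), (24, 6), (25, 3), (25, 5), (26, 0), (26, 1), (27, 1), (27, 7), (28, 1), (28, 2), (29, 2), (29, 4), (29, 6), (30, 0), (30, 4), (31, 1), (31, 3), (31, 5), (32, 1), (32, 7), (33, 5), (33, 7), (34, 0), (34, 4), (34, 6), (35, 2), (35, 4), (35, 7), (36, 2), (36, 3), (37, 1), (37, 2), (38, 3), (38, 4), (39, 0), (40, 4), (41, 2), (41, 6), (42, 4), (43, 7), (44, 0), (44, 3), (44, 7), (45, 3), (45, 7), (46, 0), (46, 1), (46, 4), (46, 5), (47, 0), (47, 3), (47, 5)]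
def LD2 : List Pr := [(0, 1), (0, 4), (0, 5), (0, 7), (1, 4), (1, 5), (1, 6), (1, 7), (2, 1), (2, 6), (3, 1), (3, 4), (3, 6), (3, 7), (4, 0), (4, 1), (4, 3), (5, 0), (5, 1), (5, 2), (5, 3), (6, 0), (6, 2), (6, 3), (7, 0), (7, 1), (7, 4), (8, 2), (8, 4), (8, 5), (8, 7), (9, 0), (9, 3), (9, 6), (9, 7), (10, 4), (10, 5), (11, 5), (11, 6), (12, 0), (12, 3), (13, 4), (13, 7), (14, 0), (14, 1), (14, 2), (14, 3), (15, 1), (16, 2), (16, 4), (17, 5), (17, 7), (18, 0), (18, 3), (18, 5), (18, 6), (18, 7), (19, 2), (19, 4), (19, 5), (19, 7), (20, 2), (20, 3), (20, 6), (21, 3), (21, 7), (22, 0), (22, 2), (22, 3), (23, 1), (23, 2), (23, 3), (23, 4), (24, 2), (24, 4), (24, 7), (25, 2), (25, 4), (25, 6), (25, 7), (26, 4), (26, 5), (26, 6), (26, 7), (27, 4), (27, 5), (27, 6), (28, 0), (28, 3), (28, 6), (29, 0), (29, 1), (29, 3), (30, 1), (30, 2), (30, 7), (31, 0), (31, 4),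 (31, 6), (32, 4), (32, 5), (32, 6), (33, 2), (33, 3), (33, 6), (34, 3), (34, 5), (35, 0), (35, 1), (35, 5), (36, 0), (36, 5), (36, 7), (37, 0), (37, 3), (38, 0), (38, 1), (38, 2), (38, 7), (39, 1), (39, 2), (39, 3), (39, 4), (40, 3), (40, 5), (40, 6), (40, 7), (41, 5), (41, 7), (42, 0), (42, 1), (42, 5), (42, 6), (43, 1), (43, 4), (43, 5), (43, 6), (44, 2), (44, 6), (45, 0), (45, 1), (45, 2), (46, 2), (47, 1)]

/-! ### Linear-time list certificates -/

/-- Remove leading copies of `v`. -/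
def strip {α : Type*} [DecidableEq α] (v : α) : List α → List α
  | [] => []
  | x :: xs => if x = v then strip v xs else x :: xs

lemma strip_mem {α : Type*} [DecidableEq α] (v : α) :
    ∀ (xs : List α) (x : α), x ∈ xs → x = v ∨ x ∈ strip v xs := by
  intro xs
  induction xs with
  | nil => intro x hx; cases hx
  | cons y ys ih =>
      intro x hx
      rw [strip]
      by_cases hy : y = v
      · simp only [hy, if_pos rfl]
        rcases List.mem_cons.mp hx with h | h
        · exact Or.inl (h.trans hy)
        · exact ih x h
      · rw [if_neg hy]; exact Or.inr hx

/-- `memAll V xs = true` certifies `xs ⊆ V` (for suitably ordered lists). -/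
def memAll {α : Type*} [DecidableEq α] : List α → List α → Bool
  | [], xs => xs.isEmpty
  | v :: vs, xs => memAll vs (strip v xs)

lemma memAll_mem {α : Type*} [DecidableEq α] :
    ∀ (V xs : List α), memAll V xs = true → ∀ x ∈ xs, x ∈ V := by
  intro V
  induction V with
  | nil =>
      intro xs h x hx
      rw [memAll] at h
      cases xs with
      | nil => cases hx
      | cons a as => simp [List.isEmpty] at h
  | cons v vs ih =>
      intro xs h x hx
      rw [memAll] at h
      rcases strip_mem v xs x hx with h1 | h1
      · exact h1 ▸ (List.mem_cons_self (a := v) (l := vs))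
      · exact List.mem_cons_of_mem v (ih _ h x h1)

/-- `cover l a b = true` certifies every element of `l` lies in `a` or `b`. -/
def cover {α : Type*} [DecidableEq α] : List α → List α → List α → Bool
  | [], a, b => a.isEmpty && b.isEmpty
  | x :: xs, a0 :: as, b0 :: bs =>
      (decide (x = a0) && cover xs as (b0 :: bs)) ||
      (decide (x = b0) && cover xs (a0 :: as) bs)
  | x :: xs, a0 :: as, [] => decide (x = a0) && cover xs as []
  | x :: xs, [], b0 :: bs => decide (x = b0) && cover xs [] bs
  | _ :: _, [], [] => false

lemma cover_mem {α : Type*} [DecidableEq α] :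
    ∀ (l a b : List α), cover l a b = true → ∀ x ∈ l, x ∈ a ∨ x ∈ b := by
  intro l
  induction l with
  | nil => intro a b _ x hx; cases hx
  | cons y ys ih =>
      intro a b h x hx
      match a, b, h with
      | a0 :: as, b0 :: bs, h =>
          rw [cover] at h
          rcases Bool.or_eq_true _ _ |>.mp h with h1 | h1
          · rcases Bool.and_eq_true _ _ |>.mp h1 with ⟨he, hc⟩
            have he' : y = a0 := of_decide_eq_true he
            rcases List.mem_cons.mp hx with rfl | hx'
            · exact Or.inl (he' ▸ (List.mem_cons_self (a := a0) (l := as)))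
            · rcases ih as (b0 :: bs) hc x hx' with h2 | h2
              · exact Or.inl (List.mem_cons_of_mem a0 h2)
              · exact Or.inr h2
          · rcases Bool.and_eq_true _ _ |>.mp h1 with ⟨he, hc⟩
            have he' : y = b0 := of_decide_eq_true he
            rcases List.mem_cons.mp hx with rfl | hx'
            · exact Or.inr (he' ▸ (List.mem_cons_self (a := b0) (l := bs)))
            · rcases ih (a0 :: as) bs hc x hx' with h2 | h2
              · exact Or.inl h2
              · exact Or.inr (List.mem_cons_of_mem b0 h2)
      | a0 :: as, [], h =>
          rw [cover] at h
          rcases Bool.and_eq_true _ _ |>.mp h with ⟨he, hc⟩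
          have he' : y = a0 := of_decide_eq_true he
          rcases List.mem_cons.mp hx with rfl | hx'
          · exact Or.inl (he' ▸ (List.mem_cons_self (a := a0) (l := as)))
          · rcases ih as [] hc x hx' with h2 | h2
            · exact Or.inl (List.mem_cons_of_mem a0 h2)
            · exact Or.inr h2
      | [], b0 :: bs, h =>
          rw [cover] at h
          rcases Bool.and_eq_true _ _ |>.mp h with ⟨he, hc⟩
          have he' : y = b0 := of_decide_eq_true he
          rcases List.mem_cons.mp hx with rfl | hx'
          · exact Or.inr (he' ▸ (List.mem_cons_self (a := b0) (l := bs)))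
          · rcases ih [] bs hc x hx' with h2 | h2
            · exact Or.inl h2
            · exact Or.inr (List.mem_cons_of_mem b0 h2)

/-- Strictly increasing check. -/
def incr : List ℕ → Bool
  | [] => true
  | [_] => true
  | a :: b :: t => decide (a < b) && incr (b :: t)

lemma incr_chain : ∀ l : List ℕ, incr l = true → l.Chain' (· < ·) := by
  intro l
  induction l with
  | nil => intro _; exact List.isChain_nil
  | cons a t ih =>
      intro h
      match t, h with
      | [], _ => exact List.isChain_singleton a
      | b :: t', h =>
          rw [incr] at h
          rcases Bool.and_eq_true _ _ |>.mp h with ⟨h1, h2⟩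
          exact List.isChain_cons_cons.mpr ⟨of_decide_eq_true h1, ih h2⟩

lemma nodup_of_map_incr {α : Type*} (f : α → ℕ) (l : List α)
    (h : incr (l.map f) = true) : l.Nodup := by
  have hp : (l.map f).Pairwise (· < ·) := List.isChain_iff_pairwise.mp (incr_chain _ h)
  exact List.Nodup.of_map f (hp.imp Nat.ne_of_lt)

lemma mem_finset_of_mem_list {α : Type*} [DecidableEq α] {l : List α} {h : Multiset.Nodup (↑l : Multiset α)}
    {x : α} (hx : x ∈ l) : x ∈ (⟨↑l, h⟩ : Finset α) := Multiset.mem_coe.mpr hx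

lemma mem_list_of_mem_finset {α : Type*} [DecidableEq α] {l : List α} {h : Multiset.Nodup (↑l : Multiset α)}
    {x : α} (hx : x ∈ (⟨↑l, h⟩ : Finset α)) : x ∈ l := Multiset.mem_coe.mp hx

/-! ### Nodup certificates and the Finsets -/

def enc4 (x : Sd) : ℕ := (((x.2.2.2 : ℕ) * 48 + (x.1 : ℕ)) * 8 + (x.2.2.1 : ℕ)) * 8 + (x.2.1 : ℕ)
def enc2 (q : Pr) : ℕ := (q.1 : ℕ) * 8 + (q.2 : ℕ)

lemma nodupLT : (LT0 ++ LT1 ++ LT2).Nodup :=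
  nodup_of_map_incr enc4 _ (by decide)
lemma nodupLV0 : LV0.Nodup := nodup_of_map_incr enc2 _ (by decide)
lemma nodupLV1 : LV1.Nodup := nodup_of_map_incr enc2 _ (by decide)
lemma nodupLV2 : LV2.Nodup := nodup_of_map_incr enc2 _ (by decide)
lemma nodupLV3 : LV3.Nodup := nodup_of_map_incr enc2 _ (by decide)

def TF : Finset Sd := ⟨↑(LT0 ++ LT1 ++ LT2), Multiset.coe_nodup.mpr nodupLT⟩
def V0F : Finset Pr := ⟨↑LV0, Multiset.coe_nodup.mpr nodupLV0⟩
def V1F : Finset Pr := ⟨↑LV1, Multiset.coe_nodup.mpr nodupLV1⟩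
def V2F : Finset Pr := ⟨↑LV2, Multiset.coe_nodup.mpr nodupLV2⟩
def V3F : Finset Pr := ⟨↑LV3, Multiset.coe_nodup.mpr nodupLV3⟩

/-! ### One abstract step of the run -/

lemma step_eq {G P S : ℕ} (pre : Set (Fin G × Fin P))
    (T : Finset (Fin G × Fin P × Fin P × Fin S)) (sF : Fin S)
    (V W : Finset (Fin G × Fin P)) (h : stepRun pre T (sF : ℕ) = ↑V)
    (hVW : ∀ q ∈ V, q ∈ W)
    (hdel : ∀ x ∈ T, x.2.2.2 = sF → (x.1, x.2.2.1) ∈ W)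
    (hcov : ∀ q ∈ W, q ∈ V ∨ ∃ n, (q.1, n) ∈ V ∧ (q.1, n, q.2, sF) ∈ T) :
    stepRun pre T ((sF : ℕ) + 1) = ↑W := by
  rw [stepRun, h]
  ext q
  simp only [Set.mem_union, Set.mem_setOf_eq, Finset.mem_coe]
  constructor
  · rintro (hq | ⟨n, hn, hlt, hq⟩)
    · exact hVW q hq
    · have he : (⟨(sF : ℕ), hlt⟩ : Fin S) = sF := Fin.eta sF hlt
      have := hdel (q.1, n, q.2, sF) (by rw [← he]; exact hq) rfl
      simpa using this
  · intro hq
    rcases hcov q hq with h' | ⟨n, hn, hT⟩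
    · exact Or.inl h'
    · refine Or.inr ⟨n, hn, sF.isLt, ?_⟩
      have he : (⟨(sF : ℕ), sF.isLt⟩ : Fin S) = sF := Fin.eta sF sF.isLt
      rw [he]
      exact hT

lemma sfB0 : LT0.all (fun x => decide (x.2.2.2 = (0 : Fin 3))) = true := by decide
lemma sf0 : ∀ x ∈ LT0, x.2.2.2 = (0 : Fin 3) :=
  fun x hx => of_decide_eq_true (List.all_eq_true.mp sfB0 x hx)
lemma srcB0 : LT0.all (fun x => decide ((x.1, x.2.1) ∈ LV0)) = true := by decide
lemma srcOK0 : ∀ x ∈ LT0, (x.1, x.2.1) ∈ LV0 :=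
  fun x hx => of_decide_eq_true (List.all_eq_true.mp srcB0 x hx)
lemma dstOK0 : memAll LV1 (LT0.map (fun x => (x.1, x.2.2.1))) = true := by decide
lemma upOK0 : memAll LV1 LV0 = true := by decide
lemma covOK0 : cover LV1 LV0 LD0 = true := by decide
lemma witB0 : LD0.all (fun d => LT0.any (fun x =>
    decide (x.1 = d.1) && decide (x.2.2.1 = d.2) && decide ((x.1, x.2.1) ∈ LV0))) = true := by
  decide
lemma witOK0 : ∀ d ∈ LD0, ∃ x ∈ LT0,
    x.1 = d.1 ∧ x.2.2.1 = d.2 ∧ (x.1, x.2.1) ∈ LV0 := by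
  intro d hd
  have h := List.all_eq_true.mp witB0 d hd
  obtain ⟨x, hx, hx2⟩ := List.any_eq_true.mp h
  rcases Bool.and_eq_true _ _ |>.mp hx2 with ⟨h12, h3⟩
  rcases Bool.and_eq_true _ _ |>.mp h12 with ⟨h1, h2⟩
  exact ⟨x, hx, of_decide_eq_true h1, of_decide_eq_true h2, of_decide_eq_true h3⟩

lemma sfB1 : LT1.all (fun x => decide (x.2.2.2 = (1 : Fin 3))) = true := by decide
lemma sf1 : ∀ x ∈ LT1, x.2.2.2 = (1 : Fin 3) :=
  fun x hx => of_decide_eq_true (List.all_eq_true.mp sfB1 x hx)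
lemma srcB1 : LT1.all (fun x => decide ((x.1, x.2.1) ∈ LV1)) = true := by decide
lemma srcOK1 : ∀ x ∈ LT1, (x.1, x.2.1) ∈ LV1 :=
  fun x hx => of_decide_eq_true (List.all_eq_true.mp srcB1 x hx)
lemma dstOK1 : memAll LV2 (LT1.map (fun x => (x.1, x.2.2.1))) = true := by decide
lemma upOK1 : memAll LV2 LV1 = true := by decide
lemma covOK1 : cover LV2 LV1 LD1 = true := by decide
lemma witB1 : LD1.all (fun d => LT1.any (fun x =>
    decide (x.1 = d.1) && decide (x.2.2.1 = d.2) && decide ((x.1, x.2.1) ∈ LV1))) = true := by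
  decide
lemma witOK1 : ∀ d ∈ LD1, ∃ x ∈ LT1,
    x.1 = d.1 ∧ x.2.2.1 = d.2 ∧ (x.1, x.2.1) ∈ LV1 := by
  intro d hd
  have h := List.all_eq_true.mp witB1 d hd
  obtain ⟨x, hx, hx2⟩ := List.any_eq_true.mp h
  rcases Bool.and_eq_true _ _ |>.mp hx2 with ⟨h12, h3⟩
  rcases Bool.and_eq_true _ _ |>.mp h12 with ⟨h1, h2⟩
  exact ⟨x, hx, of_decide_eq_true h1, of_decide_eq_true h2, of_decide_eq_true h3⟩

lemma sfB2 : LT2.all (fun x => decide (x.2.2.2 = (2 : Fin 3))) = true := by decide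
lemma sf2 : ∀ x ∈ LT2, x.2.2.2 = (2 : Fin 3) :=
  fun x hx => of_decide_eq_true (List.all_eq_true.mp sfB2 x hx)
lemma srcB2 : LT2.all (fun x => decide ((x.1, x.2.1) ∈ LV2)) = true := by decide
lemma srcOK2 : ∀ x ∈ LT2, (x.1, x.2.1) ∈ LV2 :=
  fun x hx => of_decide_eq_true (List.all_eq_true.mp srcB2 x hx)
lemma dstOK2 : memAll LV3 (LT2.map (fun x => (x.1, x.2.2.1))) = true := by decide
lemma upOK2 : memAll LV3 LV2 = true := by decide
lemma covOK2 : cover LV3 LV2 LD2 = true := by decide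
lemma witB2 : LD2.all (fun d => LT2.any (fun x =>
    decide (x.1 = d.1) && decide (x.2.2.1 = d.2) && decide ((x.1, x.2.1) ∈ LV2))) = true := by
  decide
lemma witOK2 : ∀ d ∈ LD2, ∃ x ∈ LT2,
    x.1 = d.1 ∧ x.2.2.1 = d.2 ∧ (x.1, x.2.1) ∈ LV2 := by
  intro d hd
  have h := List.all_eq_true.mp witB2 d hd
  obtain ⟨x, hx, hx2⟩ := List.any_eq_true.mp h
  rcases Bool.and_eq_true _ _ |>.mp hx2 with ⟨h12, h3⟩
  rcases Bool.and_eq_true _ _ |>.mp h12 with ⟨h1, h2⟩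
  exact ⟨x, hx, of_decide_eq_true h1, of_decide_eq_true h2, of_decide_eq_true h3⟩

lemma memTF : ∀ x, x ∈ LT0 ++ LT1 ++ LT2 → x ∈ TF := fun _ hx => mem_finset_of_mem_list hx

lemma memTF_iff : ∀ x, x ∈ TF → x ∈ LT0 ∨ x ∈ LT1 ∨ x ∈ LT2 := by
  intro x hx
  have := mem_list_of_mem_finset hx
  rcases List.mem_append.mp this with h | h
  · rcases List.mem_append.mp h with h | h
    · exact Or.inl h
    · exact Or.inr (Or.inl h)
  · exact Or.inr (Or.inr h)

section StepHyps

lemma hcov_gen (s : Fin 3)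
    (LTs : List Sd) (LV LDs LW : List Pr)
    (hV : Multiset.Nodup (↑LV : Multiset Pr)) (hW : Multiset.Nodup (↑LW : Multiset Pr))
    (hsub : LTs ⊆ LT0 ++ LT1 ++ LT2)
    (hsf : ∀ x ∈ LTs, x.2.2.2 = s)
    (hcv : cover LW LV LDs = true)
    (hwit : ∀ d ∈ LDs, ∃ x ∈ LTs, x.1 = d.1 ∧ x.2.2.1 = d.2 ∧ (x.1, x.2.1) ∈ LV) :
    ∀ q ∈ (⟨↑LW, hW⟩ : Finset Pr), q ∈ (⟨↑LV, hV⟩ : Finset Pr) ∨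
      ∃ n, (q.1, n) ∈ (⟨↑LV, hV⟩ : Finset Pr) ∧ (q.1, n, q.2, s) ∈ TF := by
  intro q hq
  rcases cover_mem _ _ _ hcv q (mem_list_of_mem_finset hq) with h | h
  · exact Or.inl (mem_finset_of_mem_list h)
  · obtain ⟨x, hxL, h1, h2, h3⟩ := hwit q h
    obtain ⟨xc, xa, xb, xs⟩ := x
    simp only at h1 h2 h3
    have hxs : xs = s := hsf _ hxL
    subst h1; subst h2
    rw [hxs] at hxL
    exact Or.inr ⟨xa, mem_finset_of_mem_list h3, memTF _ (hsub hxL)⟩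

end StepHyps

lemma preB1 : (List.finRange (6 * 8)).all (fun c => decide
    (((c : Fin (6 * 8)), (⟨(c : ℕ) % 8, Nat.mod_lt _ (by norm_num)⟩ : Fin 8)) ∈ LV0)) = true := by
  decide

lemma preB2 : LV0.all (fun q => decide ((q.1 : ℕ) % 8 = (q.2 : ℕ))) = true := by decide

lemma capB : ((List.finRange 3).all fun s => (List.finRange 8).all fun n =>
    (List.finRange 8).all fun n' =>
    decide ((TF.filter fun x => x.2.1 = n ∧ x.2.2.1 = n' ∧ x.2.2.2 = s).card ≤
      dgx1cap n n' * (if s = 0 then 2 else if s = 1 then 2 else 3))) = true := by decide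

/-- Existence of a bandwidth-optimal 3-step, 7-round Allgather on DGX-1 with `C = 6`
chunks per node (bandwidth cost `R/C = 7/6` matches the lower bound `6R ≥ 7C`). -/
theorem dgx1_allgather_three_step_seven_round_exists :
    ∃ (T : Finset (Fin (6 * 8) × Fin 8 × Fin 8 × Fin 3)) (r : Fin 3 → ℕ),
      ValidAlgo dgx1cap (agPre 6 8) Set.univ T r ∧ ∑ s, r s = 7 := by
  refine ⟨TF, (fun s => if s = 0 then 2 else if s = 1 then 2 else 3), ?_, by decide⟩
  have h0 : stepRun (agPre 6 8) TF 0 = ↑V0F := by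
    show agPre 6 8 = ↑V0F
    ext q
    simp only [agPre, Set.mem_setOf_eq, Finset.mem_coe]
    constructor
    · intro h
      have hm : ((q.1, (⟨(q.1 : ℕ) % 8, Nat.mod_lt _ (by norm_num)⟩ : Fin 8)) : Pr) ∈ LV0 :=
        of_decide_eq_true (List.all_eq_true.mp preB1 q.1 (List.mem_finRange q.1))
      have hq : q = (q.1, (⟨(q.1 : ℕ) % 8, Nat.mod_lt _ (by norm_num)⟩ : Fin 8)) := by
        obtain ⟨q1, q2⟩ := q
        exact Prod.ext rfl (Fin.ext h.symm)
      rw [hq]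
      exact mem_finset_of_mem_list hm
    · intro h
      exact of_decide_eq_true (List.all_eq_true.mp preB2 q (mem_list_of_mem_finset h))
  have h1 : stepRun (agPre 6 8) TF 1 = ↑V1F := by
    have h := step_eq (agPre 6 8) TF 0 V0F V1F h0
      (fun q hq => mem_finset_of_mem_list (memAll_mem _ _ upOK0 q (mem_list_of_mem_finset hq)))
      (by
        intro x hx hxs
        rcases memTF_iff x hx with h | h | h
        · exact mem_finset_of_mem_list (memAll_mem _ _ dstOK0 _ (List.mem_map_of_mem h))
        · exact absurd ((sf1 x h).symm.trans hxs) (by decide)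
        · exact absurd ((sf2 x h).symm.trans hxs) (by decide))
      (hcov_gen 0 LT0 LV0 LD0 LV1 _ _
        (fun x hx => List.mem_append.mpr (Or.inl (List.mem_append.mpr (Or.inl hx))))
        sf0 covOK0 witOK0)
    exact h
  have h2 : stepRun (agPre 6 8) TF 2 = ↑V2F := by
    have h := step_eq (agPre 6 8) TF 1 V1F V2F h1
      (fun q hq => mem_finset_of_mem_list (memAll_mem _ _ upOK1 q (mem_list_of_mem_finset hq)))
      (by
        intro x hx hxs
        rcases memTF_iff x hx with h | h | h
        · exact absurd ((sf0 x h).symm.trans hxs) (by decide)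
        · exact mem_finset_of_mem_list (memAll_mem _ _ dstOK1 _ (List.mem_map_of_mem h))
        · exact absurd ((sf2 x h).symm.trans hxs) (by decide))
      (hcov_gen 1 LT1 LV1 LD1 LV2 _ _
        (fun x hx => List.mem_append.mpr (Or.inl (List.mem_append.mpr (Or.inr hx))))
        sf1 covOK1 witOK1)
    exact h
  have h3 : stepRun (agPre 6 8) TF 3 = ↑V3F := by
    have h := step_eq (agPre 6 8) TF 2 V2F V3F h2
      (fun q hq => mem_finset_of_mem_list (memAll_mem _ _ upOK2 q (mem_list_of_mem_finset hq)))
      (by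
        intro x hx hxs
        rcases memTF_iff x hx with h | h | h
        · exact absurd ((sf0 x h).symm.trans hxs) (by decide)
        · exact absurd ((sf1 x h).symm.trans hxs) (by decide)
        · exact mem_finset_of_mem_list (memAll_mem _ _ dstOK2 _ (List.mem_map_of_mem h)))
      (hcov_gen 2 LT2 LV2 LD2 LV3 _ _
        (fun x hx => List.mem_append.mpr (Or.inr hx))
        sf2 covOK2 witOK2)
    exact h
  refine ⟨?_, ?_, ?_⟩
  · intro c n n' s hm
    rcases memTF_iff _ hm with h | h | h
    · have hs : s = 0 := sf0 _ h
      subst hs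
      show (c, n) ∈ stepRun (agPre 6 8) TF 0
      rw [h0]
      exact mem_finset_of_mem_list (srcOK0 _ h)
    · have hs : s = 1 := sf1 _ h
      subst hs
      show (c, n) ∈ stepRun (agPre 6 8) TF 1
      rw [h1]
      exact mem_finset_of_mem_list (srcOK1 _ h)
    · have hs : s = 2 := sf2 _ h
      subst hs
      show (c, n) ∈ stepRun (agPre 6 8) TF 2
      rw [h2]
      exact mem_finset_of_mem_list (srcOK2 _ h)
  · rw [h3]
    intro q _
    have : V3F = Finset.univ := by
      apply Finset.eq_univ_of_card
      rw [Fintype.card_prod, Fintype.card_fin, Fintype.card_fin]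
      rfl
    rw [this]
    simp
  · intro s n n'
    have h := List.all_eq_true.mp (List.all_eq_true.mp (List.all_eq_true.mp capB
      s (List.mem_finRange s)) n (List.mem_finRange n)) n' (List.mem_finRange n')
    exact of_decide_eq_true h
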